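/- Theorem 1 (alternating cycle case): Let f_1,…,f_n (n≥2) be invertible, entrywise-nonnegative real 2×2 matrices defining a pairwise cycle GM, such that ∏_{i=1}^n det f_i < 0 (an odd number of factors have negative determinant) and Z = tr(f_1 f_2 ⋯ f_n) > 0. Then there exist real 2×2 matrices G_{i,i+1}, G_{i+1,i} for each cycle edge (indices mod n) with G_{i,i+1}ᵀ G_{i+1,i} = I, such that every gauge-transformed factor f_{i,𝒢} = G_{i,i-1}ᵀ f_i G_{i,i+1} is entrywise nonnegative and ∏_{i=1}^n f_{i,𝒢}(0,0) = Z. In particular, the optimal value of the G-MF optimization for this GM equals the exact log-partition function log Z, attained at the product distribution placing all mass on the all-zero configuration. -/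

import Mathlib

/- STATEMENT 6: Theorem 1, alternating cycle case.  A pairwise cycle GM on
`n ≥ 2` vertices (encoded with `n + 2` vertices indexed by `Fin (n+2)`, with
cyclic index arithmetic) has a real 2×2 matrix factor `f i` at each vertex;
its partition function is `Z = tr (f 0 * f 1 * ⋯)`.  Edge `i` joins vertices
`i` and `i+1`; a gauge assigns matrices `A i = G_{i,i+1}` and `B i = G_{i+1,i}`
to edge `i` with `(A i)ᵀ * B i = 1`, and the transformed factor at vertex `i`
is `f_{i,𝒢} = G_{i,i-1}ᵀ * f i * G_{i,i+1} = (B (i-1))ᵀ * f i * A i`.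
If all factors are invertible, entrywise nonnegative, the product of their
determinants is negative and `Z > 0`, then there is a gauge making every
transformed factor entrywise nonnegative with
`∏ i f_{i,𝒢}(0,0) = Z` (so the optimal G-MF value is exactly `log Z`). -/

open Matrix

private lemma cayley2 (M : Matrix (Fin 2) (Fin 2) ℝ) :
    M * M = M.trace • M - M.det • 1 := by
  ext i j
  fin_cases i <;> fin_cases j <;>
    simp [Matrix.mul_apply, Fin.sum_univ_two, Matrix.det_fin_two, Matrix.trace_fin_two,
      Matrix.one_apply] <;> ring

private lemma exists_noneigen (M : Matrix (Fin 2) (Fin 2) ℝ) (h : M.det < 0) :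
    ∃ a : Fin 2 → ℝ, a 0 * (M *ᵥ a) 1 - a 1 * (M *ᵥ a) 0 ≠ 0 := by
  by_cases h10 : M 1 0 ≠ 0
  · exact ⟨![1, 0], by simpa [Matrix.mulVec, dotProduct, Fin.sum_univ_two]⟩
  · by_cases h01 : M 0 1 ≠ 0
    · exact ⟨![0, 1], by simpa [Matrix.mulVec, dotProduct, Fin.sum_univ_two]⟩
    · push_neg at h10 h01
      refine ⟨![1, 1], ?_⟩
      have hd : M.det = M 0 0 * M 1 1 - M 0 1 * M 1 0 := Matrix.det_fin_two M
      simp only [Matrix.mulVec, dotProduct, Fin.sum_univ_two]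
      simp [h10, h01] at hd ⊢
      intro hc
      have h2 : M 0 0 * M 1 1 < 0 := hd ▸ h
      have h3 : M 1 1 = M 0 0 := by linarith
      rw [h3] at h2
      nlinarith [mul_self_nonneg (M 0 0)]

theorem alternating_cycle_gmf_exact (n : ℕ)
    (f : Fin (n + 2) → Matrix (Fin 2) (Fin 2) ℝ)
    (hinv : ∀ i, IsUnit (f i))
    (hnonneg : ∀ i a b, 0 ≤ f i a b)
    (hdet : ∏ i, (f i).det < 0)
    (hZ : 0 < Matrix.trace (List.ofFn f).prod) :
    ∃ A B : Fin (n + 2) → Matrix (Fin 2) (Fin 2) ℝ,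
      (∀ i, (A i)ᵀ * B i = 1) ∧
      (∀ i a b, 0 ≤ ((B (i - 1))ᵀ * f i * A i) a b) ∧
      (∏ i, ((B (i - 1))ᵀ * f i * A i) 0 0) = Matrix.trace (List.ofFn f).prod := by
  set L : List (Matrix (Fin 2) (Fin 2) ℝ) := List.ofFn f with hL
  set M : Matrix (Fin 2) (Fin 2) ℝ := L.prod with hMdef
  set Z : ℝ := M.trace with hZdef
  have hLlen : L.length = n + 2 := by simp [hL]
  -- determinant of M
  have hdetM : M.det < 0 := by
    have h1 : M.det = (L.map Matrix.det).prod := by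
      rw [hMdef, show (Matrix.det : Matrix (Fin 2) (Fin 2) ℝ → ℝ) = ⇑(Matrix.detMonoidHom)
        from (Matrix.coe_detMonoidHom).symm]
      exact (Matrix.detMonoidHom).map_list_prod L
    rw [h1, hL, List.map_ofFn, List.prod_ofFn]
    exact hdet
  -- choice of a non-eigenvector
  obtain ⟨a, ha⟩ := exists_noneigen M hdetM
  set b : Fin 2 → ℝ := fun r => (M *ᵥ a) r - Z * a r with hb
  set A₀ : Matrix (Fin 2) (Fin 2) ℝ := Matrix.of ![![a 0, b 0], ![a 1, b 1]] with hA₀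
  set T : Matrix (Fin 2) (Fin 2) ℝ := Matrix.of ![![Z, -M.det], ![1, 0]] with hT
  have hA₀det : A₀.det = a 0 * (M *ᵥ a) 1 - a 1 * (M *ᵥ a) 0 := by
    rw [Matrix.det_fin_two]
    simp [hA₀, hb]
    ring
  have hA₀unit : IsUnit A₀.det := isUnit_iff_ne_zero.2 (by rw [hA₀det]; exact ha)
  -- M * A₀ = A₀ * T  (Cayley–Hamilton)
  have hMb : M *ᵥ b = (-M.det) • a := by
    have hbv : (b : Fin 2 → ℝ) = M *ᵥ a - Z • a := by
      funext r; simp [hb, Pi.smul_apply, smul_eq_mul]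
    have hMM : M * M - Z • M = (-M.det) • (1 : Matrix (Fin 2) (Fin 2) ℝ) := by
      rw [cayley2 M, ← hZdef, neg_smul]
      abel
    have key : (M * M) *ᵥ a - (Z • M) *ᵥ a = (-M.det) • a := by
      rw [← Matrix.sub_mulVec, hMM, Matrix.smul_mulVec, Matrix.one_mulVec]
    rw [hbv, Matrix.mulVec_sub, Matrix.mulVec_smul, Matrix.mulVec_mulVec]
    rw [← key, Matrix.smul_mulVec]
  have hMA : M * A₀ = A₀ * T := by
    have h0 := congrFun hMb 0
    have h1 := congrFun hMb 1
    simp only [Pi.smul_apply, smul_eq_mul, hb, Matrix.mulVec, dotProduct,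
      Fin.sum_univ_two] at h0 h1
    ext i j
    fin_cases i <;> fin_cases j <;>
      simp [hA₀, hT, Matrix.mul_apply, Fin.sum_univ_two, hb, Matrix.mulVec,
        dotProduct] <;>
      linarith [h0, h1]
  -- the gauge
  set AF : Fin (n + 2) → Matrix (Fin 2) (Fin 2) ℝ :=
    fun i => (L.drop (i.val + 1)).prod * A₀ with hAF
  set BF : Fin (n + 2) → Matrix (Fin 2) (Fin 2) ℝ := fun i => ((AF i)⁻¹)ᵀ with hBF
  have hAFdet : ∀ i, IsUnit (AF i).det := by
    intro i
    have hu : IsUnit ((L.drop (i.val + 1)).prod) := by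
      refine List.prod_isUnit fun m hm => ?_
      obtain ⟨j, rfl⟩ := (List.mem_ofFn).1 (List.mem_of_mem_drop hm)
      exact hinv j
    rw [hAF]
    simp only
    rw [Matrix.det_mul]
    exact ((Matrix.isUnit_iff_isUnit_det _).1 hu).mul hA₀unit
  have hAFinv : ∀ i, (AF i)⁻¹ * AF i = 1 := fun i => Matrix.nonsing_inv_mul _ (hAFdet i)
  have hBT : ∀ j, (BF j)ᵀ = (AF j)⁻¹ := by
    intro j; rw [hBF]; exact Matrix.transpose_transpose _
  -- step lemmas
  have hstep : ∀ i : Fin (n + 2), i ≠ 0 → f i * AF i = AF (i - 1) := by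
    intro i hi
    have h1 : 1 ≤ i.val := Nat.one_le_iff_ne_zero.2 fun h => hi (Fin.ext h)
    have hv : ((i : Fin (n + 2)) - 1).val = i.val - 1 := by
      rw [Fin.coe_sub_one, if_neg hi]
    have hv2 : ((i : Fin (n + 2)) - 1).val + 1 = i.val := by omega
    have hlt : i.val < L.length := by rw [hLlen]; exact i.isLt
    have hdrop : L.drop i.val = f i :: L.drop (i.val + 1) := by
      rw [List.drop_eq_getElem_cons hlt]
      congr 1
      simp only [hL, List.getElem_ofFn, Fin.eta]
    rw [hAF]
    simp only
    rw [hv2, hdrop, List.prod_cons, mul_assoc]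
  have hprev0 : AF ((0 : Fin (n + 2)) - 1) = A₀ := by
    have hv : ((0 : Fin (n + 2)) - 1).val = n + 1 := by
      rw [Fin.coe_sub_one, if_pos rfl]
    rw [hAF]
    simp only
    rw [hv, show L.drop (n + 1 + 1) = [] from
      List.drop_eq_nil_of_le (by omega), List.prod_nil, one_mul]
  have hstep0 : f 0 * AF 0 = A₀ * T := by
    have hlt : (0 : ℕ) < L.length := by rw [hLlen]; omega
    have hdrop : L = f 0 :: L.drop 1 := by
      conv_lhs => rw [← (List.drop_zero : List.drop 0 L = L)]
      rw [List.drop_eq_getElem_cons hlt]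
      congr 1
      simp only [hL, List.getElem_ofFn, Fin.eta, Fin.mk_zero]
    have hM0 : M = f 0 * (L.drop 1).prod := by
      rw [hMdef]
      conv_lhs => rw [hdrop]
      rw [List.prod_cons]
    rw [hAF]
    simp only
    rw [show ((0 : Fin (n + 2)).val + 1) = 1 from rfl, ← mul_assoc, ← hM0, hMA]
  have hg0 : (BF ((0 : Fin (n + 2)) - 1))ᵀ * f 0 * AF 0 = T := by
    rw [hBT, mul_assoc, hstep0, hprev0, ← mul_assoc,
      Matrix.nonsing_inv_mul _ hA₀unit, one_mul]
  have hgs : ∀ i : Fin (n + 2), i ≠ 0 → (BF (i - 1))ᵀ * f i * AF i = 1 := by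
    intro i hi
    rw [hBT, mul_assoc, hstep i hi]
    exact hAFinv _
  refine ⟨AF, BF, ?_, ?_, ?_⟩
  · intro i
    rw [hBF]
    simp only
    rw [← Matrix.transpose_mul, hAFinv i, Matrix.transpose_one]
  · intro i x y
    by_cases hi : i = 0
    · subst hi
      rw [hg0]
      fin_cases x <;> fin_cases y <;> simp [hT] <;> linarith [hZ, hdetM]
    · rw [hgs i hi, Matrix.one_apply]
      split_ifs <;> norm_num
  · rw [Fin.prod_univ_succ, hg0]
    have hone : ∀ i : Fin (n + 1), ((BF (i.succ - 1))ᵀ * f i.succ * AF i.succ) 0 0 = 1 := by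
      intro i
      rw [hgs _ (Fin.succ_ne_zero i)]
      simp [Matrix.one_apply]
    rw [Finset.prod_congr rfl fun i _ => hone i, Finset.prod_const_one, mul_one]
    simp [hT]
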